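/- Let (N, A, L₁) and (N, B_i, L₂) for i = 0,…,n−1 be Hadamard triples with #A = n. Fix r ≥ 1 and set 𝐀 = A ⊕ NA ⊕ ⋯ ⊕ N^{r−1}A and 𝐋₁ = L₁ ⊕ NL₁ ⊕ ⋯ ⊕ N^{r−1}L₁. Then (N^r, 𝐀, 𝐋₁) is a Hadamard triple, and for any choice of indices i₁,…,i_r ∈ {0,…,n−1}, the triple (N^r, B_{i₁} ⊕ N B_{i₂} ⊕ ⋯ ⊕ N^{r−1} B_{i_r}, L₂ ⊕ N L₂ ⊕ ⋯ ⊕ N^{r−1} L₂) is a Hadamard triple. -/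

import Mathlib

open Matrix

/-- The matrix `(1/√m)(e^{2πi dℓ/N})_{d∈D,ℓ∈L}`. -/
noncomputable def hadMatrix (N : ℤ) (D L : Finset ℤ) : Matrix D L ℂ :=
  Matrix.of fun d l => ((Real.sqrt D.card : ℝ) : ℂ)⁻¹ *
    Complex.exp (((2 * Real.pi * ((d : ℤ) : ℝ) * ((l : ℤ) : ℝ) / (N : ℝ)) : ℝ) * Complex.I)

/-- `(N, D, L)` is a Hadamard triple: `#D = #L` and the matrix
`(1/√(#D))(e^{2πi dℓ/N})` is unitary. -/
def IsHadamardTriple (N : ℤ) (D L : Finset ℤ) : Prop :=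
  D.card = L.card ∧
  hadMatrix N D L * (hadMatrix N D L)ᴴ = 1 ∧ (hadMatrix N D L)ᴴ * hadMatrix N D L = 1

/-- The set `F 0 ⊕ N·F 1 ⊕ ⋯ ⊕ N^{r-1}·F (r-1)` of all sums `∑_j N^j a_j` with
`a_j ∈ F j`. -/
noncomputable def scaledSum (N : ℤ) (r : ℕ) (F : Fin r → Finset ℤ) : Finset ℤ :=
  (Fintype.piFinset F).image fun g => ∑ j : Fin r, N ^ (j : ℕ) * g j

namespace HTAux

open Finset

noncomputable def E (x : ℝ) : ℂ := Complex.exp ((x : ℂ) * Complex.I)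

lemma E_add (x y : ℝ) : E (x + y) = E x * E y := by
  simp [E, Complex.exp_add, add_mul]

lemma E_zero : E 0 = 1 := by simp [E]

lemma E_int (k : ℤ) : E (2 * Real.pi * (k : ℝ)) = 1 := by
  have h : ((2 * Real.pi * (k : ℝ) : ℝ) : ℂ) * Complex.I
      = (k : ℤ) * (2 * Real.pi * Complex.I) := by push_cast; ring
  rw [E, h, Complex.exp_int_mul_two_pi_mul_I]

lemma E_star (x : ℝ) : star (E x) = E (-x) := by
  rw [E, E, Complex.star_def, ← Complex.exp_conj]
  congr 1
  rw [_root_.map_mul, Complex.conj_I, Complex.conj_ofReal]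
  push_cast
  ring

lemma E_sum {ι : Type*} (s : Finset ι) (f : ι → ℝ) :
    E (∑ i ∈ s, f i) = ∏ i ∈ s, E (f i) := by
  rw [E, Complex.ofReal_sum, Finset.sum_mul, Complex.exp_sum]; rfl

lemma c_mul (m : ℕ) :
    ((Real.sqrt m : ℝ) : ℂ)⁻¹ * ((Real.sqrt m : ℝ) : ℂ)⁻¹ = ((m : ℕ) : ℂ)⁻¹ := by
  have h : Real.sqrt m * Real.sqrt m = (m : ℝ) :=
    Real.mul_self_sqrt (by positivity)
  rw [← mul_inv, ← Complex.ofReal_mul, h, Complex.ofReal_natCast]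

lemma mul_conjTranspose_apply (N : ℤ) (D L : Finset ℤ) (d d' : D) :
    (hadMatrix N D L * (hadMatrix N D L)ᴴ) d d' =
      ((D.card : ℕ) : ℂ)⁻¹ *
        ∑ l ∈ L, E (2 * Real.pi * (((d : ℤ) - (d' : ℤ) : ℤ) : ℝ) * (l : ℝ) / (N : ℝ)) := by
  rw [Matrix.mul_apply]
  have hpt : ∀ j : L,
      hadMatrix N D L d j * (hadMatrix N D L)ᴴ j d' =
        ((D.card : ℕ) : ℂ)⁻¹ *
          E (2 * Real.pi * (((d : ℤ) - (d' : ℤ) : ℤ) : ℝ) * ((j : ℤ) : ℝ) / (N : ℝ)) := by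
    intro j
    have h1 : hadMatrix N D L d j
        = ((Real.sqrt D.card : ℝ) : ℂ)⁻¹ *
          E (2 * Real.pi * ((d : ℤ) : ℝ) * ((j : ℤ) : ℝ) / (N : ℝ)) := rfl
    have h2 : (hadMatrix N D L)ᴴ j d'
        = star (((Real.sqrt D.card : ℝ) : ℂ)⁻¹ *
          E (2 * Real.pi * ((d' : ℤ) : ℝ) * ((j : ℤ) : ℝ) / (N : ℝ))) := rfl
    rw [h1, h2, star_mul', E_star]
    have h3 : star (((Real.sqrt D.card : ℝ) : ℂ)⁻¹) = ((Real.sqrt D.card : ℝ) : ℂ)⁻¹ := by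
      simp
    rw [h3]
    have h4 : 2 * Real.pi * ((d : ℤ) : ℝ) * ((j : ℤ) : ℝ) / (N : ℝ) +
        -(2 * Real.pi * ((d' : ℤ) : ℝ) * ((j : ℤ) : ℝ) / (N : ℝ)) =
        2 * Real.pi * (((d : ℤ) - (d' : ℤ) : ℤ) : ℝ) * ((j : ℤ) : ℝ) / (N : ℝ) := by
      push_cast; ring
    calc ((Real.sqrt D.card : ℝ) : ℂ)⁻¹ *
          E (2 * Real.pi * ((d : ℤ) : ℝ) * ((j : ℤ) : ℝ) / (N : ℝ)) *
          (((Real.sqrt D.card : ℝ) : ℂ)⁻¹ *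
          E (-(2 * Real.pi * ((d' : ℤ) : ℝ) * ((j : ℤ) : ℝ) / (N : ℝ))))
        = (((Real.sqrt D.card : ℝ) : ℂ)⁻¹ * ((Real.sqrt D.card : ℝ) : ℂ)⁻¹) *
          (E (2 * Real.pi * ((d : ℤ) : ℝ) * ((j : ℤ) : ℝ) / (N : ℝ)) *
           E (-(2 * Real.pi * ((d' : ℤ) : ℝ) * ((j : ℤ) : ℝ) / (N : ℝ)))) := by ring
      _ = ((D.card : ℕ) : ℂ)⁻¹ *
          E (2 * Real.pi * (((d : ℤ) - (d' : ℤ) : ℤ) : ℝ) * ((j : ℤ) : ℝ) / (N : ℝ)) := by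
          rw [c_mul, ← E_add, h4]
  rw [Finset.sum_congr rfl fun j _ => hpt j, ← Finset.mul_sum]
  congr 1
  exact Finset.sum_coe_sort L
    (fun l => E (2 * Real.pi * (((d : ℤ) - (d' : ℤ) : ℤ) : ℝ) * (l : ℝ) / (N : ℝ)))

lemma conjTranspose_mul_apply (N : ℤ) (D L : Finset ℤ) (l l' : L) :
    ((hadMatrix N D L)ᴴ * hadMatrix N D L) l l' =
      ((D.card : ℕ) : ℂ)⁻¹ *
        ∑ d ∈ D, E (2 * Real.pi * (d : ℝ) * (((l' : ℤ) - (l : ℤ) : ℤ) : ℝ) / (N : ℝ)) := by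
  rw [Matrix.mul_apply]
  have hpt : ∀ j : D,
      (hadMatrix N D L)ᴴ l j * hadMatrix N D L j l' =
        ((D.card : ℕ) : ℂ)⁻¹ *
          E (2 * Real.pi * ((j : ℤ) : ℝ) * (((l' : ℤ) - (l : ℤ) : ℤ) : ℝ) / (N : ℝ)) := by
    intro j
    have h1 : hadMatrix N D L j l'
        = ((Real.sqrt D.card : ℝ) : ℂ)⁻¹ *
          E (2 * Real.pi * ((j : ℤ) : ℝ) * ((l' : ℤ) : ℝ) / (N : ℝ)) := rfl
    have h2 : (hadMatrix N D L)ᴴ l j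
        = star (((Real.sqrt D.card : ℝ) : ℂ)⁻¹ *
          E (2 * Real.pi * ((j : ℤ) : ℝ) * ((l : ℤ) : ℝ) / (N : ℝ))) := rfl
    rw [h1, h2, star_mul', E_star]
    have h3 : star (((Real.sqrt D.card : ℝ) : ℂ)⁻¹) = ((Real.sqrt D.card : ℝ) : ℂ)⁻¹ := by
      simp
    rw [h3]
    have h4 : -(2 * Real.pi * ((j : ℤ) : ℝ) * ((l : ℤ) : ℝ) / (N : ℝ)) +
        2 * Real.pi * ((j : ℤ) : ℝ) * ((l' : ℤ) : ℝ) / (N : ℝ) =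
        2 * Real.pi * ((j : ℤ) : ℝ) * (((l' : ℤ) - (l : ℤ) : ℤ) : ℝ) / (N : ℝ) := by
      push_cast; ring
    calc ((Real.sqrt D.card : ℝ) : ℂ)⁻¹ *
          E (-(2 * Real.pi * ((j : ℤ) : ℝ) * ((l : ℤ) : ℝ) / (N : ℝ))) *
          (((Real.sqrt D.card : ℝ) : ℂ)⁻¹ *
            E (2 * Real.pi * ((j : ℤ) : ℝ) * ((l' : ℤ) : ℝ) / (N : ℝ)))
        = (((Real.sqrt D.card : ℝ) : ℂ)⁻¹ * ((Real.sqrt D.card : ℝ) : ℂ)⁻¹) *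
          (E (-(2 * Real.pi * ((j : ℤ) : ℝ) * ((l : ℤ) : ℝ) / (N : ℝ))) *
           E (2 * Real.pi * ((j : ℤ) : ℝ) * ((l' : ℤ) : ℝ) / (N : ℝ))) := by ring
      _ = ((D.card : ℕ) : ℂ)⁻¹ *
          E (2 * Real.pi * ((j : ℤ) : ℝ) * (((l' : ℤ) - (l : ℤ) : ℤ) : ℝ) / (N : ℝ)) := by
          rw [c_mul, ← E_add, h4]
  rw [Finset.sum_congr rfl fun j _ => hpt j, ← Finset.mul_sum]
  congr 1
  exact Finset.sum_coe_sort D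
    (fun d => E (2 * Real.pi * (d : ℝ) * (((l' : ℤ) - (l : ℤ) : ℤ) : ℝ) / (N : ℝ)))

lemma row_ortho {N : ℤ} {D L : Finset ℤ} (h : IsHadamardTriple N D L)
    {d d' : ℤ} (hd : d ∈ D) (hd' : d' ∈ D) (hne : d ≠ d') :
    ∑ l ∈ L, E (2 * Real.pi * ((d - d' : ℤ) : ℝ) * (l : ℝ) / (N : ℝ)) = 0 := by
  have hD0 : D.card ≠ 0 := Finset.card_ne_zero_of_mem hd
  have he := congrFun (congrFun h.2.1 ⟨d, hd⟩) ⟨d', hd'⟩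
  rw [mul_conjTranspose_apply, Matrix.one_apply_ne (fun hc => hne (by
    simpa using congrArg Subtype.val hc))] at he
  have hc : ((D.card : ℕ) : ℂ) ≠ 0 := Nat.cast_ne_zero.2 hD0
  field_simp at he
  push_cast
  rw [mul_zero] at he
  exact_mod_cast he

lemma row_mod {N : ℤ} {D L : Finset ℤ} (hN0 : (N : ℝ) ≠ 0)
    (h : IsHadamardTriple N D L)
    {d d' : ℤ} (hd : d ∈ D) (hd' : d' ∈ D) (hdvd : N ∣ d - d') : d = d' := by
  by_contra hne
  have h0 := row_ortho h hd hd' hne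
  obtain ⟨k, hk⟩ := hdvd
  have hterm : ∀ l ∈ L, E (2 * Real.pi * ((d - d' : ℤ) : ℝ) * (l : ℝ) / (N : ℝ)) = 1 := by
    intro l _
    have harg : 2 * Real.pi * ((d - d' : ℤ) : ℝ) * (l : ℝ) / (N : ℝ)
        = 2 * Real.pi * ((k * l : ℤ) : ℝ) := by
      rw [hk]; push_cast; field_simp
    rw [harg, E_int]
  rw [Finset.sum_congr rfl hterm, Finset.sum_const, nsmul_eq_mul, mul_one] at h0
  have : L.card = 0 := by exact_mod_cast h0
  have : D.card = 0 := by rw [h.1, this]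
  exact Finset.card_ne_zero_of_mem hd this

lemma col_ortho {N : ℤ} {D L : Finset ℤ} (h : IsHadamardTriple N D L)
    {l l' : ℤ} (hl : l ∈ L) (hl' : l' ∈ L) (hne : l ≠ l') :
    ∑ d ∈ D, E (2 * Real.pi * (d : ℝ) * ((l - l' : ℤ) : ℝ) / (N : ℝ)) = 0 := by
  have hL0 : L.card ≠ 0 := Finset.card_ne_zero_of_mem hl
  have hD0 : D.card ≠ 0 := by rw [h.1]; exact hL0
  have he := congrFun (congrFun h.2.2 ⟨l', hl'⟩) ⟨l, hl⟩
  rw [conjTranspose_mul_apply, Matrix.one_apply_ne (fun hc => hne (by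
    simpa using (congrArg Subtype.val hc).symm))] at he
  have hc : ((D.card : ℕ) : ℂ) ≠ 0 := Nat.cast_ne_zero.2 hD0
  field_simp at he
  push_cast
  rw [mul_zero] at he
  exact_mod_cast he

lemma col_mod {N : ℤ} {D L : Finset ℤ} (hN0 : (N : ℝ) ≠ 0)
    (h : IsHadamardTriple N D L)
    {l l' : ℤ} (hl : l ∈ L) (hl' : l' ∈ L) (hdvd : N ∣ l - l') : l = l' := by
  by_contra hne
  have h0 := col_ortho h hl hl' hne
  obtain ⟨k, hk⟩ := hdvd
  have hterm : ∀ d ∈ D, E (2 * Real.pi * (d : ℝ) * ((l - l' : ℤ) : ℝ) / (N : ℝ)) = 1 := by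
    intro d _
    have harg : 2 * Real.pi * (d : ℝ) * ((l - l' : ℤ) : ℝ) / (N : ℝ)
        = 2 * Real.pi * ((d * k : ℤ) : ℝ) := by
      rw [hk]; push_cast; field_simp
    rw [harg, E_int]
  rw [Finset.sum_congr rfl hterm, Finset.sum_const, nsmul_eq_mul, mul_one] at h0
  have hD0 : D.card = 0 := by exact_mod_cast h0
  have hL0 : L.card = 0 := by rw [← h.1, hD0]
  exact Finset.card_ne_zero_of_mem hl hL0

lemma sum_inj (N : ℤ) (hN0 : N ≠ 0) :
    ∀ (r : ℕ) (D : Fin r → Finset ℤ),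
      (∀ j : Fin r, ∀ d ∈ D j, ∀ d' ∈ D j, N ∣ d - d' → d = d') →
      ∀ g ∈ Fintype.piFinset D, ∀ g' ∈ Fintype.piFinset D,
        (∑ k : Fin r, N ^ (k : ℕ) * g k) = (∑ k : Fin r, N ^ (k : ℕ) * g' k) → g = g' := by
  intro r
  induction r with
  | zero =>
    intro D _ g _ g' _ _
    funext k; exact k.elim0
  | succ r ih =>
    intro D hmod g hg g' hg' hsum
    have hfac : ∀ x : Fin (r + 1) → ℤ,
        (∑ k : Fin (r + 1), N ^ (k : ℕ) * x k)
          = x 0 + N * ∑ k : Fin r, N ^ (k : ℕ) * x k.succ := by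
      intro x
      rw [Fin.sum_univ_succ]
      simp only [Fin.val_zero, pow_zero, one_mul, Fin.val_succ, pow_succ]
      rw [Finset.mul_sum]
      congr 1
      exact Finset.sum_congr rfl fun k _ => by ring
    rw [hfac, hfac] at hsum
    have hmem : ∀ k, g k ∈ D k := Fintype.mem_piFinset.1 hg
    have hmem' : ∀ k, g' k ∈ D k := Fintype.mem_piFinset.1 hg'
    have h0 : g 0 = g' 0 := by
      refine hmod 0 _ (hmem 0) _ (hmem' 0)
        ⟨(∑ k : Fin r, N ^ (k : ℕ) * g' k.succ) - ∑ k : Fin r, N ^ (k : ℕ) * g k.succ, ?_⟩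
      rw [mul_sub]; linarith
    have htail : (fun k : Fin r => g k.succ) = (fun k : Fin r => g' k.succ) := by
      refine ih (fun k => D k.succ) (fun k => hmod k.succ)
        _ (Fintype.mem_piFinset.2 fun k => hmem k.succ)
        _ (Fintype.mem_piFinset.2 fun k => hmem' k.succ) ?_
      have : N * (∑ k : Fin r, N ^ (k : ℕ) * g k.succ)
          = N * ∑ k : Fin r, N ^ (k : ℕ) * g' k.succ := by linarith
      exact mul_left_cancel₀ hN0 this
    funext k
    refine Fin.cases ?_ ?_ k
    · exact h0
    · intro i; exact congrFun htail i

lemma exp_arith (Nr : ℝ) (hN0 : Nr ≠ 0) (jn m : ℕ) (u v t : ℝ) :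
    2 * Real.pi * (Nr ^ jn * u + Nr ^ (jn + 1) * v) * (Nr ^ m * t) / Nr ^ (jn + m + 1)
      = 2 * Real.pi * u * t / Nr + 2 * Real.pi * (v * t) := by
  rw [pow_add, pow_add, pow_one, pow_add]
  field_simp

lemma gen_vanish (N : ℤ) (hN : 2 ≤ N) (r : ℕ) (T : Fin r → Finset ℤ)
    (x x' : Fin r → ℤ) (hxx : x ≠ x')
    (h0 : ∀ j k : Fin r, x j ≠ x' j →
      ∑ t ∈ T k, E (2 * Real.pi * ((x j - x' j : ℤ) : ℝ) * (t : ℝ) / (N : ℝ)) = 0) :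
    ∑ a ∈ Fintype.piFinset T,
      E (2 * Real.pi *
          (((∑ m : Fin r, N ^ (m : ℕ) * x m) - ∑ m : Fin r, N ^ (m : ℕ) * x' m : ℤ) : ℝ) *
        ((∑ k : Fin r, N ^ (k : ℕ) * a k : ℤ) : ℝ) / ((N : ℝ) ^ r)) = 0 := by
  classical
  have hN0 : (N : ℝ) ≠ 0 := by
    have : (0 : ℝ) < (N : ℝ) := by exact_mod_cast (by omega : (0 : ℤ) < N)
    linarith
  set d : ℤ := (∑ m : Fin r, N ^ (m : ℕ) * x m) - ∑ m : Fin r, N ^ (m : ℕ) * x' m with hd_def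
  have hne : (Finset.univ.filter fun j : Fin r => x j ≠ x' j).Nonempty := by
    by_contra hc
    apply hxx
    funext j
    by_contra hj
    exact hc ⟨j, Finset.mem_filter.2 ⟨Finset.mem_univ _, hj⟩⟩
  set j : Fin r := (Finset.univ.filter fun j : Fin r => x j ≠ x' j).min' hne with hj_def
  have hj : x j ≠ x' j := (Finset.mem_filter.1 (Finset.min'_mem _ hne)).2
  have hlt : ∀ k : Fin r, k < j → x k = x' k := by
    intro k hk
    by_contra hc
    exact absurd (Finset.min'_le _ k (Finset.mem_filter.2 ⟨Finset.mem_univ _, hc⟩))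
      (not_le.2 hk)
  have hjr : (j : ℕ) < r := j.isLt
  -- divisibility structure of d
  have hdw : ∃ w : ℤ, d = N ^ (j : ℕ) * (x j - x' j) + N ^ ((j : ℕ) + 1) * w := by
    have h1 : d = ∑ m : Fin r, N ^ (m : ℕ) * (x m - x' m) := by
      rw [hd_def, ← Finset.sum_sub_distrib]
      exact Finset.sum_congr rfl fun m _ => by ring
    have h2 : N ^ ((j : ℕ) + 1) ∣
        ∑ m ∈ Finset.univ.erase j, N ^ (m : ℕ) * (x m - x' m) := by
      refine Finset.dvd_sum fun m hm => ?_
      have hmj : m ≠ j := (Finset.mem_erase.1 hm).1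
      rcases lt_or_gt_of_ne hmj with hlt' | hgt
      · rw [hlt m hlt', sub_self, mul_zero]
        exact dvd_zero _
      · refine Dvd.dvd.mul_right ?_ _
        exact pow_dvd_pow N (by exact_mod_cast hgt)
    obtain ⟨w, hw⟩ := h2
    refine ⟨w, ?_⟩
    rw [h1, ← Finset.add_sum_erase _ _ (Finset.mem_univ j), hw]
  obtain ⟨w, hw⟩ := hdw
  -- factor the sum
  have hsplit : ∀ a : Fin r → ℤ,
      E (2 * Real.pi * (d : ℝ) * ((∑ k : Fin r, N ^ (k : ℕ) * a k : ℤ) : ℝ) / ((N : ℝ) ^ r))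
        = ∏ k : Fin r,
          E (2 * Real.pi * (d : ℝ) * ((N : ℝ) ^ (k : ℕ) * (a k : ℝ)) / ((N : ℝ) ^ r)) := by
    intro a
    rw [← E_sum]
    congr 1
    push_cast
    rw [Finset.mul_sum, Finset.sum_div]
  rw [Finset.sum_congr rfl fun a _ => hsplit a]
  have hpus := Finset.prod_univ_sum (κ := fun _ : Fin r => ℤ) T
    (fun k t => E (2 * Real.pi * (d : ℝ) * ((N : ℝ) ^ (k : ℕ) * (t : ℝ)) / ((N : ℝ) ^ r)))
  rw [← hpus]
  have hk0r : r - 1 - (j : ℕ) < r := by omega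
  refine Finset.prod_eq_zero (Finset.mem_univ (⟨r - 1 - (j : ℕ), hk0r⟩ : Fin r)) ?_
  have hexp : ∀ t : ℤ,
      2 * Real.pi * (d : ℝ) * ((N : ℝ) ^ (r - 1 - (j : ℕ)) * (t : ℝ)) / ((N : ℝ) ^ r)
        = 2 * Real.pi * ((x j - x' j : ℤ) : ℝ) * (t : ℝ) / (N : ℝ)
          + 2 * Real.pi * ((w * t : ℤ) : ℝ) := by
    intro t
    have hpowr : (N : ℝ) ^ r = (N : ℝ) ^ ((j : ℕ) + (r - 1 - (j : ℕ)) + 1) := by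
      congr 1; omega
    rw [hw]
    push_cast
    rw [hpowr]
    exact exp_arith (N : ℝ) hN0 (j : ℕ) (r - 1 - (j : ℕ)) _ _ _
  have hterm : ∀ t ∈ T ⟨r - 1 - (j : ℕ), hk0r⟩,
      E (2 * Real.pi * (d : ℝ) *
          ((N : ℝ) ^ ((⟨r - 1 - (j : ℕ), hk0r⟩ : Fin r) : ℕ) * (t : ℝ)) / ((N : ℝ) ^ r))
        = E (2 * Real.pi * ((x j - x' j : ℤ) : ℝ) * (t : ℝ) / (N : ℝ)) := by
    intro t _
    rw [show ((⟨r - 1 - (j : ℕ), hk0r⟩ : Fin r) : ℕ) = r - 1 - (j : ℕ) from rfl,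
      hexp t, E_add, E_int, mul_one]
  rw [Finset.sum_congr rfl hterm]
  exact h0 j _ hj

lemma main (N : ℤ) (hN : 2 ≤ N) (r : ℕ) (D : Fin r → Finset ℤ) (L : Finset ℤ)
    (h : ∀ j : Fin r, IsHadamardTriple N (D j) L) :
    IsHadamardTriple (N ^ r) (scaledSum N r D) (scaledSum N r fun _ => L) := by
  classical
  have hN0 : (N : ℝ) ≠ 0 := by
    have : (0 : ℝ) < (N : ℝ) := by exact_mod_cast (by omega : (0 : ℤ) < N)
    linarith
  have hNz : N ≠ 0 := by omega
  -- injectivity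
  have hinjD : ∀ g ∈ Fintype.piFinset D, ∀ g' ∈ Fintype.piFinset D,
      (∑ k : Fin r, N ^ (k : ℕ) * g k) = (∑ k : Fin r, N ^ (k : ℕ) * g' k) → g = g' :=
    sum_inj N hNz r D fun j d hd d' hd' hdvd => row_mod hN0 (h j) hd hd' hdvd
  have hinjL : ∀ g ∈ Fintype.piFinset (fun _ : Fin r => L),
      ∀ g' ∈ Fintype.piFinset (fun _ : Fin r => L),
      (∑ k : Fin r, N ^ (k : ℕ) * g k) = (∑ k : Fin r, N ^ (k : ℕ) * g' k) → g = g' :=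
    sum_inj N hNz r _ fun j l hl l' hl' hdvd => col_mod hN0 (h j) hl hl' hdvd
  have hcD : (scaledSum N r D).card = ∏ j : Fin r, (D j).card := by
    rw [scaledSum, Finset.card_image_of_injOn fun g hg g' hg' => hinjD g hg g' hg',
      Fintype.card_piFinset]
  have hcL : (scaledSum N r fun _ : Fin r => L).card = ∏ _j : Fin r, L.card := by
    rw [scaledSum, Finset.card_image_of_injOn fun g hg g' hg' => hinjL g hg g' hg',
      Fintype.card_piFinset]
  have hDL : (scaledSum N r D).card = (scaledSum N r fun _ : Fin r => L).card := by
    rw [hcD, hcL]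
    exact Finset.prod_congr rfl fun j _ => (h j).1
  have h1 : hadMatrix (N ^ r) (scaledSum N r D) (scaledSum N r fun _ => L) *
      (hadMatrix (N ^ r) (scaledSum N r D) (scaledSum N r fun _ => L))ᴴ = 1 := by
    ext d d'
    rw [mul_conjTranspose_apply]
    by_cases hdd : d = d'
    · subst hdd
      rw [Matrix.one_apply_eq]
      have hone : ∀ l ∈ (scaledSum N r fun _ : Fin r => L),
          E (2 * Real.pi * (((d : ℤ) - (d : ℤ) : ℤ) : ℝ) * (l : ℝ) / ((N ^ r : ℤ) : ℝ)) = 1 := by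
        intro l _
        rw [show (((d : ℤ) - (d : ℤ) : ℤ) : ℝ) = 0 by push_cast; ring]
        rw [show 2 * Real.pi * (0 : ℝ) * (l : ℝ) / ((N ^ r : ℤ) : ℝ) = 0 by ring, E_zero]
      rw [Finset.sum_congr rfl hone, Finset.sum_const, nsmul_eq_mul, mul_one, ← hDL]
      have hc : ((scaledSum N r D).card : ℂ) ≠ 0 :=
        Nat.cast_ne_zero.2 (Finset.card_ne_zero_of_mem d.2)
      exact inv_mul_cancel₀ hc
    · rw [Matrix.one_apply_ne hdd]
      obtain ⟨g, hg, hgs⟩ := Finset.mem_image.1 (show (d : ℤ) ∈ _ from d.2)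
      obtain ⟨g', hg', hgs'⟩ := Finset.mem_image.1 (show (d' : ℤ) ∈ _ from d'.2)
      have hgg : g ≠ g' := by
        intro hc
        exact hdd (Subtype.ext (by rw [← hgs, ← hgs', hc]))
      have hzero := gen_vanish N hN r (fun _ => L) g g' hgg
        (fun j k hj => row_ortho (h j) (Fintype.mem_piFinset.1 hg j)
          (Fintype.mem_piFinset.1 hg' j) hj)
      have himg : (scaledSum N r fun _ : Fin r => L)
          = (Fintype.piFinset fun _ : Fin r => L).image
              (fun g => ∑ k : Fin r, N ^ (k : ℕ) * g k) := rfl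
      rw [himg, Finset.sum_image fun a ha a' ha' hrel => hinjL a ha a' ha' hrel]
      rw [show ∑ a ∈ Fintype.piFinset (fun _ : Fin r => L),
          E (2 * Real.pi * (((d : ℤ) - (d' : ℤ) : ℤ) : ℝ) *
            ((∑ k : Fin r, N ^ (k : ℕ) * a k : ℤ) : ℝ) / ((N ^ r : ℤ) : ℝ))
        = ∑ a ∈ Fintype.piFinset (fun _ : Fin r => L),
          E (2 * Real.pi *
              (((∑ m : Fin r, N ^ (m : ℕ) * g m) - ∑ m : Fin r, N ^ (m : ℕ) * g' m : ℤ) : ℝ) *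
            ((∑ k : Fin r, N ^ (k : ℕ) * a k : ℤ) : ℝ) / ((N : ℝ) ^ r)) from
        Finset.sum_congr rfl fun a _ => by rw [← hgs, ← hgs']; push_cast; ring_nf]
      rw [hzero, mul_zero]
  refine ⟨hDL, h1, ?_⟩
  have hcards : Fintype.card (scaledSum N r D) =
      Fintype.card (scaledSum N r fun _ : Fin r => L) := by
    rw [Fintype.card_coe, Fintype.card_coe, hDL]
  exact (Matrix.mul_eq_one_comm_of_equiv (Fintype.equivOfCardEq hcards)).1 h1

end HTAux

theorem stmt_2 (N : ℤ) (hN : 2 ≤ N) (n : ℕ) (A L₁ L₂ : Finset ℤ) (B : Fin n → Finset ℤ)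
    (hA : A.card = n)
    (hAL : IsHadamardTriple N A L₁)
    (hB : ∀ i : Fin n, IsHadamardTriple N (B i) L₂)
    (r : ℕ) (hr : 1 ≤ r) :
    IsHadamardTriple (N ^ r) (scaledSum N r fun _ => A) (scaledSum N r fun _ => L₁) ∧
    ∀ idx : Fin r → Fin n,
      IsHadamardTriple (N ^ r) (scaledSum N r fun j => B (idx j))
        (scaledSum N r fun _ => L₂) := by
  exact ⟨HTAux.main N hN r (fun _ => A) L₁ (fun _ => hAL),
    fun idx => HTAux.main N hN r (fun j => B (idx j)) L₂ (fun j => hB (idx j))⟩
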